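/- Let G be a finite connected simple graph. Then 0 is a root of the Laplacian matching polynomial 𝓛𝓜(G, x) if and only if G is a tree (i.e., G is connected and acyclic). -/

import Mathlib

namespace LM

open Finset

variable {V : Type*}

/-- The set of matchings of `G`, as finsets of edges that pairwise share no vertex. -/
def matchings [Fintype V] [DecidableEq V] (G : SimpleGraph V) [DecidableRel G.Adj] :
    Finset (Finset (Sym2 V)) :=
  G.edgeFinset.powerset.filter
    (fun M => ∀ e ∈ M, ∀ f ∈ M, e ≠ f → ∀ w : V, w ∈ e → w ∉ f)

/-- The set of vertices covered by a set of edges. -/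
def covered [Fintype V] [DecidableEq V] (M : Finset (Sym2 V)) : Finset V :=
  Finset.univ.filter (fun v => ∃ e ∈ M, v ∈ e)

/-- The multivariate matching polynomial `𝔐(G, x_G)`. -/
noncomputable def mvMatch [Fintype V] [DecidableEq V] (G : SimpleGraph V)
    [DecidableRel G.Adj] : MvPolynomial V ℝ :=
  ∑ M ∈ matchings G, (-1 : MvPolynomial V ℝ) ^ M.card *
    ∏ v ∈ Finset.univ \ covered M, MvPolynomial.X v

/-- The matching polynomial `𝓜(G, x)`. -/
noncomputable def matchPoly [Fintype V] [DecidableEq V] (G : SimpleGraph V)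
    [DecidableRel G.Adj] : Polynomial ℝ :=
  ∑ M ∈ matchings G, (-1 : Polynomial ℝ) ^ M.card *
    Polynomial.X ^ (Fintype.card V - 2 * M.card)

/-- The Laplacian matching polynomial `𝓛𝓜(G, x)`. -/
noncomputable def lapMatch [Fintype V] [DecidableEq V] (G : SimpleGraph V)
    [DecidableRel G.Adj] : Polynomial ℝ :=
  ∑ M ∈ matchings G, (-1 : Polynomial ℝ) ^ M.card *
    ∏ v ∈ Finset.univ \ covered M, (Polynomial.X - Polynomial.C (G.degree v : ℝ))

/-- The largest real root of a polynomial (`sSup` of its set of real roots). -/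
noncomputable def lroot (p : Polynomial ℝ) : ℝ := sSup {x : ℝ | p.IsRoot x}

instance instDecidableRelInduceAdj (G : SimpleGraph V) [DecidableRel G.Adj] (s : Set V) :
    DecidableRel (G.induce s).Adj := fun a b =>
  inferInstanceAs (Decidable (G.Adj a b))

section Aux

variable [Fintype V] [DecidableEq V] (G : SimpleGraph V) [DecidableRel G.Adj]

lemma mem_matchings {M : Finset (Sym2 V)} :
    M ∈ matchings G ↔ M ⊆ G.edgeFinset ∧
      ∀ e ∈ M, ∀ f ∈ M, e ≠ f → ∀ w : V, w ∈ e → w ∉ f := by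
  simp [matchings]

lemma mem_covered {M : Finset (Sym2 V)} {v : V} :
    v ∈ covered M ↔ ∃ e ∈ M, v ∈ e := by simp [covered]

lemma covered_empty : covered (∅ : Finset (Sym2 V)) = ∅ := by
  ext v; simp [mem_covered]

def tset (M : Finset (Sym2 V)) (v : V) : Finset (Sym2 V) :=
  if v ∈ covered M then {s(v, v)} else G.incidenceFinset v

noncomputable def cfg : Finset ((_ : Finset (Sym2 V)) × (V → Sym2 V)) :=
  (matchings G).sigma (fun M => Fintype.piFinset (tset G M))

noncomputable def wt (x : (_ : Finset (Sym2 V)) × (V → Sym2 V)) : ℝ :=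
  (-1) ^ (x.1.card + (Finset.univ \ covered x.1).card)

lemma mem_cfg {x : (_ : Finset (Sym2 V)) × (V → Sym2 V)} :
    x ∈ cfg G ↔ x.1 ∈ matchings G ∧ ∀ v, x.2 v ∈ tset G x.1 v := by
  cases x with
  | mk M f => simp [cfg, Finset.mem_sigma, Fintype.mem_piFinset]

lemma eval_lapMatch : (lapMatch G).eval 0 = ∑ x ∈ cfg G, wt x := by
  have h1 : (lapMatch G).eval 0 =
      ∑ M ∈ matchings G, (-1 : ℝ) ^ M.card *
        ∏ v ∈ Finset.univ \ covered M, (0 - (G.degree v : ℝ)) := by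
    simp [lapMatch, Polynomial.eval_finset_sum, Polynomial.eval_prod]
  rw [h1]
  rw [cfg, Finset.sum_sigma]
  refine Finset.sum_congr rfl fun M hM => ?_
  have hprod : ∏ v ∈ Finset.univ \ covered M, (0 - (G.degree v : ℝ)) =
      (-1 : ℝ) ^ (Finset.univ \ covered M).card *
        ∏ v ∈ Finset.univ \ covered M, (G.degree v : ℝ) := by
    rw [← Finset.prod_const, ← Finset.prod_mul_distrib]
    exact Finset.prod_congr rfl fun v _ => by ring
  have hcard : ∏ v ∈ Finset.univ \ covered M, (G.degree v : ℝ) =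
      ((Fintype.piFinset (tset G M)).card : ℝ) := by
    rw [Fintype.card_piFinset]
    rw [← Finset.prod_sdiff (Finset.subset_univ (covered M))]
    push_cast
    rw [show (∏ v ∈ covered M, ((tset G M v).card : ℝ)) = 1 from
      Finset.prod_eq_one fun v hv => by simp [tset, hv]]
    rw [mul_one]
    refine Finset.prod_congr rfl fun v hv => ?_
    have hv' : v ∉ covered M := (Finset.mem_sdiff.1 hv).2
    simp [tset, hv', SimpleGraph.card_incidenceFinset_eq_degree]
  rw [hprod, hcard]
  have : ∀ x ∈ Fintype.piFinset (tset G M), wt (⟨M, x⟩ : (_ : Finset (Sym2 V)) × (V → Sym2 V)) = (-1 : ℝ) ^ (M.card + (Finset.univ \ covered M).card) := fun x _ => rfl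
  rw [Finset.sum_congr rfl this, Finset.sum_const, nsmul_eq_mul, pow_add]
  ring
def active (x : (_ : Finset (Sym2 V)) × (V → Sym2 V)) : Finset (Sym2 V) :=
  x.1 ∪ G.edgeFinset.filter (fun e => ∀ w ∈ e, w ∉ covered x.1 ∧ x.2 w = e)

lemma mem_active {x : (_ : Finset (Sym2 V)) × (V → Sym2 V)} {e : Sym2 V} :
    e ∈ active G x ↔ e ∈ x.1 ∨
      (e ∈ G.edgeFinset ∧ ∀ w ∈ e, w ∉ covered x.1 ∧ x.2 w = e) := by
  simp [active]

lemma fst_subset_active (x : (_ : Finset (Sym2 V)) × (V → Sym2 V)) :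
    x.1 ⊆ active G x := Finset.subset_union_left

lemma mem_covered_erase {M : Finset (Sym2 V)} (hM : M ∈ matchings G) {e : Sym2 V}
    (he : e ∈ M) {v : V} :
    v ∈ covered (M.erase e) ↔ v ∈ covered M ∧ v ∉ e := by
  simp only [mem_covered]
  constructor
  · rintro ⟨f, hf, hvf⟩
    have hfM := Finset.mem_of_mem_erase hf
    have hfe := Finset.ne_of_mem_erase hf
    exact ⟨⟨f, hfM, hvf⟩, (mem_matchings G).1 hM |>.2 f hfM e he hfe v hvf⟩
  · rintro ⟨⟨f, hf, hvf⟩, hve⟩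
    exact ⟨f, Finset.mem_erase.2 ⟨fun h => hve (h ▸ hvf), hf⟩, hvf⟩

lemma mem_covered_insert {M : Finset (Sym2 V)} {e : Sym2 V} {v : V} :
    v ∈ covered (insert e M) ↔ v ∈ e ∨ v ∈ covered M := by
  simp [mem_covered, or_and_right, exists_or]

def tog (x : (_ : Finset (Sym2 V)) × (V → Sym2 V)) (e : Sym2 V) :
    (_ : Finset (Sym2 V)) × (V → Sym2 V) :=
  if e ∈ x.1 then ⟨x.1.erase e, fun v => if v ∈ e then e else x.2 v⟩
  else ⟨insert e x.1, fun v => if v ∈ e then s(v, v) else x.2 v⟩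

-- basic facts extracted from cfg membership
lemma cfg_fcov {x : (_ : Finset (Sym2 V)) × (V → Sym2 V)} (hx : x ∈ cfg G)
    {v : V} (hv : v ∈ covered x.1) : x.2 v = s(v, v) := by
  have := ((mem_cfg G).1 hx).2 v
  simpa [tset, hv] using this

lemma cfg_finc {x : (_ : Finset (Sym2 V)) × (V → Sym2 V)} (hx : x ∈ cfg G)
    {v : V} (hv : v ∉ covered x.1) : x.2 v ∈ G.edgeFinset ∧ v ∈ x.2 v := by
  have := ((mem_cfg G).1 hx).2 v
  simp only [tset, if_neg hv, SimpleGraph.mem_incidenceFinset] at this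
  exact ⟨SimpleGraph.mem_edgeFinset.2 this.1, this.2⟩

section CaseA
variable {x : (_ : Finset (Sym2 V)) × (V → Sym2 V)} {e : Sym2 V}

lemma togA_mem (hx : x ∈ cfg G) (he : e ∈ x.1) : tog x e ∈ cfg G := by
  have hM := ((mem_cfg G).1 hx).1
  rw [tog, if_pos he, mem_cfg]
  constructor
  · rw [mem_matchings] at hM ⊢
    exact ⟨(Finset.erase_subset e x.1).trans hM.1,
      fun e₁ h₁ e₂ h₂ hne w hw => hM.2 e₁ (Finset.mem_of_mem_erase h₁) e₂
        (Finset.mem_of_mem_erase h₂) hne w hw⟩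
  · intro v
    by_cases hve : v ∈ e
    · have hvc : v ∉ covered (x.1.erase e) := fun hc =>
        ((mem_covered_erase G hM he).1 hc).2 hve
      simp only [tset, if_neg hvc, if_pos hve, SimpleGraph.mem_incidenceFinset]
      exact ⟨SimpleGraph.mem_edgeFinset.1 ((mem_matchings G).1 hM |>.1 he), hve⟩
    · simp only [if_neg hve]
      by_cases hvc : v ∈ covered x.1
      · have : v ∈ covered (x.1.erase e) := (mem_covered_erase G hM he).2 ⟨hvc, hve⟩
        simp only [tset, if_pos this]
        simp [cfg_fcov G hx hvc]
      · have : v ∉ covered (x.1.erase e) := fun hc =>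
          hvc ((mem_covered_erase G hM he).1 hc).1
        simp only [tset, if_neg this, SimpleGraph.mem_incidenceFinset]
        have h2 := cfg_finc G hx hvc
        exact ⟨SimpleGraph.mem_edgeFinset.1 h2.1, h2.2⟩

lemma togA_active (hx : x ∈ cfg G) (he : e ∈ x.1) :
    active G (tog x e) = active G x := by
  have hM := ((mem_cfg G).1 hx).1
  have hecov : ∀ w ∈ e, w ∈ covered x.1 := fun w hw => mem_covered.2 ⟨e, he, hw⟩
  rw [tog, if_pos he]
  ext e'
  simp only [mem_active]
  constructor
  · rintro (h | ⟨hE, hall⟩)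
    · exact Or.inl (Finset.mem_of_mem_erase h)
    · by_cases hee : e' = e
      · exact Or.inl (hee ▸ he)
      · right
        refine ⟨hE, fun w hw => ?_⟩
        have h2 := hall w hw
        have hwn : w ∉ e := fun hwe => by
          rw [if_pos hwe] at h2
          exact hee h2.2.symm
        rw [if_neg hwn] at h2
        have hcov : w ∉ covered x.1 := fun hc =>
          h2.1 ((mem_covered_erase G hM he).2 ⟨hc, hwn⟩)
        exact ⟨hcov, h2.2⟩
  · rintro (h | ⟨hE, hall⟩)
    · by_cases hee : e' = e
      · subst hee
        right
        refine ⟨(mem_matchings G).1 hM |>.1 he, fun w hw => ?_⟩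
        exact ⟨fun hc => ((mem_covered_erase G hM he).1 hc).2 hw, if_pos hw⟩
      · exact Or.inl (Finset.mem_erase.2 ⟨hee, h⟩)
    · right
      refine ⟨hE, fun w hw => ?_⟩
      have h2 := hall w hw
      have hwe : w ∉ e := fun hwe => h2.1 (hecov w hwe)
      exact ⟨fun hc => h2.1 ((mem_covered_erase G hM he).1 hc).1,
        by rw [if_neg hwe]; exact h2.2⟩

lemma togA_wt (hx : x ∈ cfg G) (he : e ∈ x.1) : wt (tog x e) = - wt x := by
  have hM := ((mem_cfg G).1 hx).1
  have hE : e ∈ G.edgeFinset := (mem_matchings G).1 hM |>.1 he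
  have hnd : ¬ e.IsDiag := G.not_isDiag_of_mem_edgeSet (SimpleGraph.mem_edgeFinset.1 hE)
  induction e using Sym2.ind with
  | _ a b =>
  have hab : a ≠ b := by simpa using hnd
  have hacov : a ∈ covered x.1 := mem_covered.2 ⟨s(a,b), he, Sym2.mem_mk_left a b⟩
  have hbcov : b ∈ covered x.1 := mem_covered.2 ⟨s(a,b), he, Sym2.mem_mk_right a b⟩
  have hm : (x.1.erase s(a,b)).card + 1 = x.1.card := Finset.card_erase_add_one he
  have hU : Finset.univ \ covered (x.1.erase s(a,b)) =
      insert a (insert b (Finset.univ \ covered x.1)) := by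
    ext v
    simp only [Finset.mem_sdiff, Finset.mem_univ, true_and, Finset.mem_insert,
      mem_covered_erase G hM he, Sym2.mem_iff]
    constructor
    · intro h
      by_cases hva : v = a
      · exact Or.inl hva
      by_cases hvb : v = b
      · exact Or.inr (Or.inl hvb)
      · refine Or.inr (Or.inr ?_)
        intro hc
        exact h ⟨hc, by simp [hva, hvb]⟩
    · rintro (rfl | rfl | h) hc
      · exact hc.2 (Or.inl rfl)
      · exact hc.2 (Or.inr rfl)
      · exact h hc.1
  have hu : (Finset.univ \ covered (x.1.erase s(a,b))).card =
      (Finset.univ \ covered x.1).card + 2 := by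
    rw [hU, Finset.card_insert_of_notMem (by simpa using ⟨hab, hacov⟩),
      Finset.card_insert_of_notMem (by simpa using hbcov)]
  rw [tog, if_pos he]
  show ((-1 : ℝ)) ^ ((x.1.erase s(a,b)).card + (Finset.univ \ covered (x.1.erase s(a,b))).card) = - ((-1 : ℝ)) ^ (x.1.card + (Finset.univ \ covered x.1).card)
  have hkey : (x.1.erase s(a,b)).card + (Finset.univ \ covered (x.1.erase s(a,b))).card
      = x.1.card + (Finset.univ \ covered x.1).card + 1 := by omega
  rw [hkey, pow_succ]
  ring

lemma togA_inv (hx : x ∈ cfg G) (he : e ∈ x.1) : tog (tog x e) e = x := by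
  have h1 : tog x e = ⟨x.1.erase e, fun v => if v ∈ e then e else x.2 v⟩ := by
    rw [tog, if_pos he]
  rw [h1, tog, if_neg (by exact Finset.notMem_erase e x.1)]
  obtain ⟨M, f⟩ := x
  simp only
  congr 1
  · exact Finset.insert_erase he
  · refine funext fun v => ?_
    by_cases hve : v ∈ e
    · simp only [if_pos hve]
      exact (cfg_fcov G hx (mem_covered.2 ⟨e, he, hve⟩)).symm
    · simp [if_neg hve]

end CaseA

section CaseB
variable {x : (_ : Finset (Sym2 V)) × (V → Sym2 V)} {e : Sym2 V}

lemma free_active (hea : e ∈ active G x) (he : e ∉ x.1) :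
    e ∈ G.edgeFinset ∧ ∀ w ∈ e, w ∉ covered x.1 ∧ x.2 w = e := by
  rcases (mem_active G).1 hea with h | h
  · exact absurd h he
  · exact h

lemma togB_mem (hx : x ∈ cfg G) (hea : e ∈ active G x) (he : e ∉ x.1) :
    tog x e ∈ cfg G := by
  obtain ⟨hE, hall⟩ := free_active G hea he
  have hM := ((mem_cfg G).1 hx).1
  rw [tog, if_neg he, mem_cfg]
  constructor
  · rw [mem_matchings] at hM ⊢
    refine ⟨Finset.insert_subset hE hM.1, ?_⟩
    intro e₁ h₁ e₂ h₂ hne w hw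
    have h₁' : e₁ = e ∨ e₁ ∈ x.1 := Finset.mem_insert.1 h₁
    have h₂' : e₂ = e ∨ e₂ ∈ x.1 := Finset.mem_insert.1 h₂
    clear h₁ h₂
    rcases h₁' with rfl | h₁' <;> rcases h₂' with rfl | h₂'
    · exact absurd rfl hne
    · exact fun hw2 => (hall w hw).1 (mem_covered.2 ⟨e₂, h₂', hw2⟩)
    · exact fun hw2 => (hall w hw2).1 (mem_covered.2 ⟨e₁, h₁', hw⟩)
    · exact hM.2 e₁ h₁' e₂ h₂' hne w hw
  · intro v
    by_cases hve : v ∈ e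
    · have : v ∈ covered (insert e x.1) := mem_covered_insert.2 (Or.inl hve)
      simp [tset, this, if_pos hve]
    · simp only [if_neg hve]
      by_cases hvc : v ∈ covered x.1
      · have : v ∈ covered (insert e x.1) := mem_covered_insert.2 (Or.inr hvc)
        simp only [tset, if_pos this]
        simp [cfg_fcov G hx hvc]
      · have : v ∉ covered (insert e x.1) := fun hc => by
          rcases mem_covered_insert.1 hc with h | h
          exacts [hve h, hvc h]
        simp only [tset, if_neg this, SimpleGraph.mem_incidenceFinset]
        have h2 := cfg_finc G hx hvc
        exact ⟨SimpleGraph.mem_edgeFinset.1 h2.1, h2.2⟩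

lemma togB_active (hx : x ∈ cfg G) (hea : e ∈ active G x) (he : e ∉ x.1) :
    active G (tog x e) = active G x := by
  obtain ⟨hE, hall⟩ := free_active G hea he
  rw [tog, if_neg he]
  ext e'
  simp only [mem_active]
  constructor
  · rintro (h | ⟨hE', hall'⟩)
    · rcases Finset.mem_insert.1 h with rfl | h
      · exact (mem_active G).1 hea
      · exact Or.inl h
    · right
      refine ⟨hE', fun w hw => ?_⟩
      have h2 := hall' w hw
      have hwe : w ∉ e := fun hwe => h2.1 (mem_covered_insert.2 (Or.inl hwe))
      have hwc : w ∉ covered x.1 := fun hc => h2.1 (mem_covered_insert.2 (Or.inr hc))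
      refine ⟨hwc, ?_⟩
      have := h2.2
      rwa [if_neg hwe] at this
  · rintro (h | ⟨hE', hall'⟩)
    · exact Or.inl (Finset.mem_insert_of_mem h)
    · by_cases hee : e' = e
      · exact Or.inl (hee ▸ Finset.mem_insert_self e x.1)
      · right
        refine ⟨hE', fun w hw => ?_⟩
        have h2 := hall' w hw
        have hwe : w ∉ e := fun hwe => hee (by rw [← h2.2, (hall w hwe).2])
        refine ⟨fun hc => ?_, by rw [if_neg hwe]; exact h2.2⟩
        rcases mem_covered_insert.1 hc with h | h
        exacts [hwe h, h2.1 h]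

lemma togB_wt (hx : x ∈ cfg G) (hea : e ∈ active G x) (he : e ∉ x.1) :
    wt (tog x e) = - wt x := by
  obtain ⟨hE, hall⟩ := free_active G hea he
  have hnd : ¬ e.IsDiag := G.not_isDiag_of_mem_edgeSet (SimpleGraph.mem_edgeFinset.1 hE)
  induction e using Sym2.ind with
  | _ a b =>
  have hab : a ≠ b := by simpa using hnd
  have hacov : a ∉ covered x.1 := (hall a (Sym2.mem_mk_left a b)).1
  have hbcov : b ∉ covered x.1 := (hall b (Sym2.mem_mk_right a b)).1
  have hm : (insert s(a,b) x.1).card = x.1.card + 1 := Finset.card_insert_of_notMem he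
  have hU : Finset.univ \ covered x.1 =
      insert a (insert b (Finset.univ \ covered (insert s(a,b) x.1))) := by
    ext v
    simp only [Finset.mem_sdiff, Finset.mem_univ, true_and, Finset.mem_insert]
    constructor
    · intro h
      by_cases hva : v = a
      · exact Or.inl hva
      by_cases hvb : v = b
      · exact Or.inr (Or.inl hvb)
      · refine Or.inr (Or.inr fun hc => ?_)
        rcases mem_covered_insert.1 hc with h' | h'
        · rcases Sym2.mem_iff.1 h' with rfl | rfl
          exacts [hva rfl, hvb rfl]
        · exact h h'
    · rintro (rfl | rfl | h)
      · exact hacov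
      · exact hbcov
      · exact fun hc => h (mem_covered_insert.2 (Or.inr hc))
  have hu : (Finset.univ \ covered x.1).card =
      (Finset.univ \ covered (insert s(a,b) x.1)).card + 2 := by
    rw [hU, Finset.card_insert_of_notMem, Finset.card_insert_of_notMem]
    · have : b ∈ covered (insert s(a,b) x.1) :=
        mem_covered_insert.2 (Or.inl (Sym2.mem_mk_right a b))
      simpa using this
    · have : a ∈ covered (insert s(a,b) x.1) :=
        mem_covered_insert.2 (Or.inl (Sym2.mem_mk_left a b))
      simpa using ⟨hab, this⟩
  rw [tog, if_neg he]
  show ((-1 : ℝ)) ^ ((insert s(a,b) x.1).card +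
      (Finset.univ \ covered (insert s(a,b) x.1)).card) =
    - ((-1 : ℝ)) ^ (x.1.card + (Finset.univ \ covered x.1).card)
  have hkey : x.1.card + (Finset.univ \ covered x.1).card =
      ((insert s(a,b) x.1).card + (Finset.univ \ covered (insert s(a,b) x.1)).card) + 1 := by
    omega
  rw [hkey, pow_succ]
  ring

lemma togB_inv (hx : x ∈ cfg G) (hea : e ∈ active G x) (he : e ∉ x.1) :
    tog (tog x e) e = x := by
  obtain ⟨hE, hall⟩ := free_active G hea he
  have h1 : tog x e = ⟨insert e x.1, fun v => if v ∈ e then s(v, v) else x.2 v⟩ := by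
    rw [tog, if_neg he]
  rw [h1, tog, if_pos (by exact Finset.mem_insert_self e x.1)]
  obtain ⟨M, f⟩ := x
  simp only
  congr 1
  · exact Finset.erase_insert he
  · refine funext fun v => ?_
    by_cases hve : v ∈ e
    · simp only [if_pos hve]
      exact ((hall v hve).2).symm
    · simp [if_neg hve]

end CaseB

section Tog
variable {x : (_ : Finset (Sym2 V)) × (V → Sym2 V)} {e : Sym2 V}

lemma tog_mem (hx : x ∈ cfg G) (hea : e ∈ active G x) : tog x e ∈ cfg G := by
  by_cases he : e ∈ x.1
  exacts [togA_mem G hx he, togB_mem G hx hea he]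

lemma tog_active (hx : x ∈ cfg G) (hea : e ∈ active G x) :
    active G (tog x e) = active G x := by
  by_cases he : e ∈ x.1
  exacts [togA_active G hx he, togB_active G hx hea he]

lemma tog_wt (hx : x ∈ cfg G) (hea : e ∈ active G x) : wt (tog x e) = - wt x := by
  by_cases he : e ∈ x.1
  exacts [togA_wt G hx he, togB_wt G hx hea he]

lemma tog_inv (hx : x ∈ cfg G) (hea : e ∈ active G x) : tog (tog x e) e = x := by
  by_cases he : e ∈ x.1
  exacts [togA_inv G hx he, togB_inv G hx hea he]

lemma tog_ne (hx : x ∈ cfg G) (hea : e ∈ active G x) : tog x e ≠ x := by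
  by_cases he : e ∈ x.1
  · intro h
    have : (tog x e).1.card + 1 = x.1.card := by
      rw [tog, if_pos he]; exact Finset.card_erase_add_one he
    rw [h] at this
    omega
  · intro h
    have : (tog x e).1.card = x.1.card + 1 := by
      rw [tog, if_neg he]; exact Finset.card_insert_of_notMem he
    rw [h] at this
    omega

end Tog

section Sum

noncomputable local instance : LinearOrder (Sym2 V) :=
  LinearOrder.lift' (Fintype.equivFin (Sym2 V)) (Fintype.equivFin (Sym2 V)).injective

lemma sum_mov_zero :
    ∑ x ∈ (cfg G).filter (fun x => ¬ active G x = ∅), wt x = 0 := by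
  have hmem : ∀ x (hx : x ∈ (cfg G).filter (fun x => ¬ active G x = ∅)),
      x ∈ cfg G ∧ (active G x).Nonempty := fun x hx =>
    ⟨(Finset.mem_filter.1 hx).1,
      Finset.nonempty_iff_ne_empty.2 (Finset.mem_filter.1 hx).2⟩
  refine Finset.sum_involution
    (fun x hx => tog x ((active G x).min' (hmem x hx).2))
    (fun x hx => ?_) (fun x hx _ => ?_) (fun x hx => ?_) (fun x hx => ?_)
  · rw [tog_wt G (hmem x hx).1 (Finset.min'_mem _ _)]
    ring
  · exact tog_ne G (hmem x hx).1 (Finset.min'_mem _ _)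
  · rw [Finset.mem_filter]
    refine ⟨tog_mem G (hmem x hx).1 (Finset.min'_mem _ _), ?_⟩
    rw [tog_active G (hmem x hx).1 (Finset.min'_mem _ _)]
    exact (Finset.mem_filter.1 hx).2
  · have hkey : ∀ (h1 : (active G (tog x ((active G x).min' (hmem x hx).2))).Nonempty),
        (active G (tog x ((active G x).min' (hmem x hx).2))).min' h1 =
        (active G x).min' (hmem x hx).2 := by
      intro h1
      congr 1
      exact tog_active G (hmem x hx).1 (Finset.min'_mem _ _)
    beta_reduce
    rw [hkey]
    exact tog_inv G (hmem x hx).1 (Finset.min'_mem _ _)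

lemma eval_eq_card :
    (lapMatch G).eval 0 = (-1 : ℝ) ^ (Fintype.card V) *
      (((cfg G).filter (fun x => active G x = ∅)).card : ℝ) := by
  rw [eval_lapMatch]
  rw [← Finset.sum_filter_add_sum_filter_not (cfg G) (fun x => active G x = ∅) wt]
  rw [sum_mov_zero, add_zero]
  have h : ∀ x ∈ (cfg G).filter (fun x => active G x = ∅),
      wt x = (-1 : ℝ) ^ (Fintype.card V) := by
    intro x hx
    obtain ⟨hc, hA⟩ := Finset.mem_filter.1 hx
    have h1 : x.1 = ∅ := Finset.subset_empty.1 (hA ▸ fst_subset_active G x)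
    rw [wt, h1, covered_empty]
    simp
  rw [Finset.sum_congr rfl h, Finset.sum_const, nsmul_eq_mul, mul_comm]

lemma isRoot_iff_fix_empty :
    (lapMatch G).IsRoot 0 ↔ (cfg G).filter (fun x => active G x = ∅) = ∅ := by
  rw [Polynomial.IsRoot, eval_eq_card]
  constructor
  · intro h
    rcases mul_eq_zero.1 h with h' | h'
    · exact absurd h' (pow_ne_zero _ (by norm_num))
    · exact Finset.card_eq_zero.1 (Nat.cast_eq_zero.1 h')
  · intro h
    rw [h]
    simp

end Sum

section Graph

lemma fix_empty_of_isTree (hT : G.IsTree) :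
    (cfg G).filter (fun x => active G x = ∅) = ∅ := by
  rw [Finset.eq_empty_iff_forall_notMem]
  intro x hx
  obtain ⟨hc, hA⟩ := Finset.mem_filter.1 hx
  have h1 : x.1 = ∅ := Finset.subset_empty.1 (hA ▸ fst_subset_active G x)
  have hnc : ∀ v : V, v ∉ covered x.1 := by
    intro v
    rw [h1, covered_empty]
    exact Finset.notMem_empty v
  have hf : ∀ v, x.2 v ∈ G.edgeFinset ∧ v ∈ x.2 v := fun v => cfg_finc G hc (hnc v)
  have hinj : Function.Injective x.2 := by
    intro a b hab
    by_contra hne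
    have hae : a ∈ x.2 a := (hf a).2
    have hbe : b ∈ x.2 a := hab ▸ (hf b).2
    have hact : x.2 a ∈ active G x := by
      rw [mem_active]
      right
      refine ⟨(hf a).1, fun w hw => ?_⟩
      refine ⟨hnc w, ?_⟩
      have hsab : x.2 a = s(a, b) :=
        Sym2.eq_of_ne_mem hne hae hbe (Sym2.mem_mk_left a b) (Sym2.mem_mk_right a b)
      rcases Sym2.mem_iff.1 (by rw [← hsab]; exact hw) with rfl | rfl
      · rfl
      · exact hab.symm
    rw [hA] at hact
    exact absurd hact (Finset.notMem_empty _)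
  have hcard : Fintype.card V ≤ G.edgeFinset.card := by
    have := Finset.card_le_card_of_injOn (s := (Finset.univ : Finset V))
      (t := G.edgeFinset) x.2 (fun v _ => (hf v).1) (Set.injOn_of_injective hinj)
    simpa using this
  have hT' := hT.card_edgeFinset
  omega

def nextEdge : ∀ {u w : V}, G.Walk u w → V → Sym2 V
  | _, _, SimpleGraph.Walk.nil, v => s(v, v)
  | u, _, SimpleGraph.Walk.cons (v := c) _h p, x =>
      if x = u then s(u, c) else nextEdge p x

lemma nextEdge_spec {u w : V} (p : G.Walk u w) (v : V) (hv : v ∈ p.support.dropLast) :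
    v ∈ nextEdge G p v ∧ nextEdge G p v ∈ p.edges := by
  induction p with
  | nil => simp at hv
  | @cons a b c h q ih =>
    by_cases hva : v = a
    · subst hva
      simp only [nextEdge, if_pos rfl]
      exact ⟨Sym2.mem_mk_left v b, by simp⟩
    · have hv' : v ∈ q.support.dropLast := by
        rw [SimpleGraph.Walk.support_cons,
          List.dropLast_cons_of_ne_nil (SimpleGraph.Walk.support_ne_nil q)] at hv
        rcases List.mem_cons.1 hv with rfl | h'
        · exact absurd rfl hva
        · exact h'
      simp only [nextEdge, if_neg hva]
      exact ⟨(ih hv').1, by simp [(ih hv').2]⟩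

lemma nextEdge_inj {u w : V} (p : G.Walk u w) (hp : p.IsTrail) :
    ∀ a ∈ p.support.dropLast, ∀ b ∈ p.support.dropLast, a ≠ b →
      nextEdge G p a ≠ nextEdge G p b := by
  induction p with
  | nil => intro a ha; simp at ha
  | @cons s t r h q ih =>
    intro a ha b hb hne
    rw [SimpleGraph.Walk.isTrail_cons] at hp
    rw [SimpleGraph.Walk.support_cons,
      List.dropLast_cons_of_ne_nil (SimpleGraph.Walk.support_ne_nil q)] at ha hb
    by_cases has : a = s <;> by_cases hbs : b = s
    · exact absurd (has.trans hbs.symm) hne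
    · have hb' : b ∈ q.support.dropLast := by
        rcases List.mem_cons.1 hb with h' | h'
        exacts [absurd h' hbs, h']
      subst has
      simp only [nextEdge]
      rw [if_true, if_neg hbs]
      intro heq
      exact hp.2 (heq ▸ (nextEdge_spec G q b hb').2)
    · have ha' : a ∈ q.support.dropLast := by
        rcases List.mem_cons.1 ha with h' | h'
        exacts [absurd h' has, h']
      subst hbs
      simp only [nextEdge]
      rw [if_true, if_neg has]
      intro heq
      exact hp.2 (heq.symm ▸ (nextEdge_spec G q a ha').2)
    · have ha' : a ∈ q.support.dropLast := by
        rcases List.mem_cons.1 ha with h' | h'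
        exacts [absurd h' has, h']
      have hb' : b ∈ q.support.dropLast := by
        rcases List.mem_cons.1 hb with h' | h'
        exacts [absurd h' hbs, h']
      simp only [nextEdge]
      rw [if_neg has, if_neg hbs]
      exact ih hp.1 a ha' b hb' hne

end Graph

section Construct

lemma mem_dropLast_of_mem {α : Type*} {l : List α} (h : l ≠ []) {a : α}
    (ha : a ∈ l) (hne : a ≠ l.getLast h) : a ∈ l.dropLast := by
  conv at ha => rw [← List.dropLast_append_getLast h]
  rcases List.mem_append.1 ha with h' | h'
  · exact h'
  · simp only [List.mem_singleton] at h'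
    exact absurd h' hne

lemma mem_dropLast_of_cycle {v₀ : V} (c : G.Walk v₀ v₀) (hc : c.IsCycle) {u : V}
    (hu : u ∈ c.support) : u ∈ c.support.dropLast := by
  have hlen : 3 ≤ c.length := hc.three_le_length
  have h4 : c.support.length = c.length + 1 := SimpleGraph.Walk.length_support c
  have htail : c.support.tail ≠ [] := by
    have h5 : c.support.tail.length = c.length := by
      rw [List.length_tail, h4]
      omega
    intro h
    rw [h] at h5
    simp at h5
    omega
  by_cases huv : u = v₀
  · subst huv
    rw [SimpleGraph.Walk.support_eq_cons c, List.dropLast_cons_of_ne_nil htail]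
    exact List.mem_cons_self
  · refine mem_dropLast_of_mem (SimpleGraph.Walk.support_ne_nil c) hu ?_
    simp only [SimpleGraph.Walk.getLast_support]
    exact huv

lemma fix_nonempty_of_cycle (hG : G.Connected) {v₀ : V} (c : G.Walk v₀ v₀)
    (hc : c.IsCycle) :
    ((cfg G).filter (fun x => active G x = ∅)).Nonempty := by
  classical
  set Cfin : Finset V := c.support.toFinset with hCfin
  have hCne : Cfin.Nonempty := ⟨v₀, by simp [hCfin]⟩
  set D : V → ℕ := fun u => (Cfin.image (G.dist u)).min' (hCne.image _) with hD
  have hD_le : ∀ u, ∀ w ∈ Cfin, D u ≤ G.dist u w := fun u w hw =>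
    Finset.min'_le _ _ (Finset.mem_image_of_mem _ hw)
  have hD_ex : ∀ u, ∃ w ∈ Cfin, G.dist u w = D u := by
    intro u
    have := Finset.min'_mem (Cfin.image (G.dist u)) (hCne.image _)
    rw [Finset.mem_image] at this
    obtain ⟨w, hw, hw'⟩ := this
    exact ⟨w, hw, hw'⟩
  have hpar : ∀ u, u ∉ Cfin → ∃ p, G.Adj u p ∧ D p < D u := by
    intro u hu
    obtain ⟨w, hw, hdw⟩ := hD_ex u
    have hru : G.Reachable u w := hG.preconnected u w
    have hDpos : 0 < D u := by
      rcases Nat.eq_zero_or_pos (D u) with h0 | h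
      · exfalso
        rw [h0] at hdw
        rcases SimpleGraph.dist_eq_zero_iff_eq_or_not_reachable.1 hdw with rfl | hnr
        · exact hu hw
        · exact hnr hru
      · exact h
    obtain ⟨pw, hlen⟩ := hru.exists_walk_length_eq_dist
    cases pw with
    | nil => exact absurd hw hu
    | @cons _ b _ hadj q =>
      refine ⟨b, hadj, ?_⟩
      have h1 : G.dist b w ≤ q.length := SimpleGraph.dist_le q
      have h2 : q.length + 1 = G.dist u w := by simpa using hlen
      have h3 : D b ≤ G.dist b w := hD_le b w hw
      omega
  set f : V → Sym2 V := fun u =>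
    if h : u ∈ c.support then nextEdge G c u
    else s(u, (hpar u (by simpa [hCfin] using h)).choose) with hf
  have hfspec : ∀ u, u ∈ f u ∧ f u ∈ G.edgeFinset := by
    intro u
    simp only [hf]
    by_cases h : u ∈ c.support
    · rw [dif_pos h]
      have := nextEdge_spec G c u (mem_dropLast_of_cycle G c hc h)
      exact ⟨this.1, SimpleGraph.mem_edgeFinset.2
        (SimpleGraph.Walk.edges_subset_edgeSet c this.2)⟩
    · rw [dif_neg h]
      refine ⟨Sym2.mem_mk_left _ _, SimpleGraph.mem_edgeFinset.2 ?_⟩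
      exact (hpar u (by simpa [hCfin] using h)).choose_spec.1
  have hfoff : ∀ u (h : u ∉ c.support), f u = s(u, (hpar u (by simpa [hCfin] using h)).choose) := by
    intro u h
    simp only [hf]
    exact dif_neg h
  have hfD : ∀ u, u ∉ c.support → ∀ z ∈ f u, z ≠ u → D z < D u := by
    intro u h z hz hzu
    rw [hfoff u h] at hz
    rcases Sym2.mem_iff.1 hz with rfl | rfl
    · exact absurd rfl hzu
    · exact (hpar u (by simpa [hCfin] using h)).choose_spec.2
  have hfsup : ∀ u, u ∈ c.support → ∀ z ∈ f u, z ∈ c.support := by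
    intro u h z hz
    simp only [hf, dif_pos h] at hz
    have hE := (nextEdge_spec G c u (mem_dropLast_of_cycle G c hc h)).2
    obtain ⟨y, hy⟩ := Sym2.mem_iff_exists.1 hz
    rw [hy] at hE
    exact SimpleGraph.Walk.fst_mem_support_of_mem_edges c hE
  have hinj : Function.Injective f := by
    intro a b hab
    by_contra hne
    by_cases ha : a ∈ c.support <;> by_cases hb : b ∈ c.support
    · -- both on cycle
      have := nextEdge_inj G c hc.isTrail a (mem_dropLast_of_cycle G c hc ha)
        b (mem_dropLast_of_cycle G c hc hb) hne
      simp only [hf, dif_pos ha, dif_pos hb] at hab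
      exact this hab
    · exact hb (hfsup a ha b (by rw [hab]; exact (hfspec b).1))
    · exact ha (hfsup b hb a (by rw [← hab]; exact (hfspec a).1))
    · -- both off cycle
      have hba : b ∈ f a := by rw [hab]; exact (hfspec b).1
      have hab' : a ∈ f b := by rw [← hab]; exact (hfspec a).1
      have h1 : D b < D a := hfD a ha b hba (Ne.symm hne)
      have h2 : D a < D b := hfD b hb a hab' hne
      omega
  -- build the configuration
  refine ⟨⟨∅, f⟩, Finset.mem_filter.2 ⟨?_, ?_⟩⟩
  · rw [mem_cfg]
    constructor
    · rw [mem_matchings]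
      exact ⟨Finset.empty_subset _, fun e he => absurd he (Finset.notMem_empty e)⟩
    · intro v
      have hvc : v ∉ covered (∅ : Finset (Sym2 V)) := by
        rw [covered_empty]; exact Finset.notMem_empty v
      show f v ∈ tset G ∅ v
      rw [tset, if_neg (by rw [covered_empty]; exact Finset.notMem_empty v),
        SimpleGraph.mem_incidenceFinset]
      exact ⟨SimpleGraph.mem_edgeFinset.1 (hfspec v).2, (hfspec v).1⟩
  · rw [Finset.eq_empty_iff_forall_notMem]
    intro e hee
    rcases (mem_active G).1 hee with h | ⟨hE, hall⟩
    · exact absurd h (Finset.notMem_empty e)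
    · have hnd : ¬ e.IsDiag := G.not_isDiag_of_mem_edgeSet (SimpleGraph.mem_edgeFinset.1 hE)
      induction e using Sym2.ind with
      | _ a b =>
        have hab : a ≠ b := by simpa using hnd
        have h1 : f a = s(a, b) := (hall a (Sym2.mem_mk_left a b)).2
        have h2 : f b = s(a, b) := (hall b (Sym2.mem_mk_right a b)).2
        exact hab (hinj (h1.trans h2.symm))

end Construct

end Aux

/-- For a finite connected graph `G`, `0` is a root of the Laplacian
matching polynomial `𝓛𝓜(G, x)` if and only if `G` is a tree. -/
theorem lapMatch_isRoot_zero_iff_isTree [Fintype V] [DecidableEq V] (G : SimpleGraph V)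
    [DecidableRel G.Adj] (hG : G.Connected) :
    (lapMatch G).IsRoot 0 ↔ G.IsTree := by
  rw [isRoot_iff_fix_empty]
  constructor
  · intro h
    rw [SimpleGraph.isTree_iff]
    refine ⟨hG, ?_⟩
    by_contra hnac
    unfold SimpleGraph.IsAcyclic at hnac
    push_neg at hnac
    obtain ⟨v₀, c, hc⟩ := hnac
    have hne := fix_nonempty_of_cycle G hG c hc
    rw [h] at hne
    exact Finset.not_nonempty_empty hne
  · intro hT
    exact fix_empty_of_isTree G hT


end LM
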